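/- Let u, η : ℝ² → ℝ be smooth functions of (x,t) satisfying the shallow water equations u_t = ∂_x(u²/2 + η) and η_t = ∂_x(uη). Define A_k := u^k η for k = 0, 1, 2, …. Then the Benney momentum chain holds: ∂_t A_k = ∂_x A_{k+1} + k A_{k−1} ∂_x A₀ for every k ≥ 0, where for k = 0 the term k A_{k−1} ∂_x A₀ is zero. -/

import Mathlib

open Real Set

/-- Partial derivative in the first variable. -/
noncomputable def pdx (f : ℝ → ℝ → ℝ) (x t : ℝ) : ℝ := deriv (fun x' => f x' t) x

/-- Partial derivative in the second variable. -/
noncomputable def pdt (f : ℝ → ℝ → ℝ) (x t : ℝ) : ℝ := deriv (fun t' => f x t') t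

/-- Solutions of the shallow water equations `uₜ = ∂ₓ(u²/2 + η)`, `ηₜ = ∂ₓ(uη)`
give a reduction `A_k = uᵏη` of the Benney momentum chain
`∂ₜ A_k = ∂ₓ A_{k+1} + k A_{k−1} ∂ₓ A₀` (the last term being zero for `k = 0`). -/
theorem shallow_water_satisfies_benney_chain
    (u η : ℝ → ℝ → ℝ)
    (hu : ContDiff ℝ (⊤ : ℕ∞) (Function.uncurry u))
    (hη : ContDiff ℝ (⊤ : ℕ∞) (Function.uncurry η))
    (h1 : ∀ x t : ℝ, pdt u x t = pdx (fun x' t' => (u x' t') ^ 2 / 2 + η x' t') x t)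
    (h2 : ∀ x t : ℝ, pdt η x t = pdx (fun x' t' => u x' t' * η x' t') x t)
    (A : ℕ → ℝ → ℝ → ℝ)
    (hA : ∀ (k : ℕ) (x t : ℝ), A k x t = (u x t) ^ k * η x t) :
    ∀ (k : ℕ) (x t : ℝ),
      pdt (A k) x t = pdx (A (k + 1)) x t + (k : ℝ) * A (k - 1) x t * pdx (A 0) x t := by
  have hud := hu.differentiable (by simp)
  have hηd := hη.differentiable (by simp)
  have hux : ∀ x t : ℝ, DifferentiableAt ℝ (fun x' => u x' t) x := fun x t =>
    (hud (x, t)).comp (f := fun x' : ℝ => (x', t)) x (differentiableAt_id.prodMk (differentiableAt_const t))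
  have hut : ∀ x t : ℝ, DifferentiableAt ℝ (fun t' => u x t') t := fun x t =>
    (hud (x, t)).comp t ((differentiableAt_const x).prodMk differentiableAt_id)
  have hηx : ∀ x t : ℝ, DifferentiableAt ℝ (fun x' => η x' t) x := fun x t =>
    (hηd (x, t)).comp (f := fun x' : ℝ => (x', t)) x (differentiableAt_id.prodMk (differentiableAt_const t))
  have hηt : ∀ x t : ℝ, DifferentiableAt ℝ (fun t' => η x t') t := fun x t =>
    (hηd (x, t)).comp t ((differentiableAt_const x).prodMk differentiableAt_id)
  intro k x t
  set Ux := deriv (fun x' => u x' t) x with hUx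
  set Ex := deriv (fun x' => η x' t) x with hEx
  -- the time derivatives via the PDE
  have hUt : deriv (fun t' => u x t') t = u x t * Ux + Ex := by
    have := h1 x t
    unfold pdt pdx at this
    rw [this]
    rw [deriv_fun_add (((hux x t).fun_pow 2).div_const 2) (hηx x t), deriv_div_const,
      deriv_fun_pow (hux x t) 2]
    push_cast
    ring
  have hEt : deriv (fun t' => η x t') t = Ux * η x t + u x t * Ex := by
    have := h2 x t
    unfold pdt pdx at this
    rw [this, deriv_fun_mul (hux x t) (hηx x t)]
  -- rewrite A via u^k η
  have hAfunt : ∀ m : ℕ, (fun t' => A m x t') = fun t' => u x t' ^ m * η x t' :=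
    fun m => funext fun t' => hA m x t'
  have hAfunx : ∀ m : ℕ, (fun x' => A m x' t) = fun x' => u x' t ^ m * η x' t :=
    fun m => funext fun x' => hA m x' t
  have hLHS : pdt (A k) x t
      = ((k : ℝ) * u x t ^ (k - 1) * (u x t * Ux + Ex)) * η x t
        + u x t ^ k * (Ux * η x t + u x t * Ex) := by
    unfold pdt
    rw [hAfunt k, deriv_fun_mul ((hut x t).fun_pow k) (hηt x t), deriv_fun_pow (hut x t) k,
      hUt, hEt]
  have hRHS1 : pdx (A (k + 1)) x t
      = (((k : ℝ) + 1) * u x t ^ k * Ux) * η x t + u x t ^ (k + 1) * Ex := by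
    unfold pdx
    rw [hAfunx (k + 1), deriv_fun_mul ((hux x t).fun_pow (k + 1)) (hηx x t),
      deriv_fun_pow (hux x t) (k + 1)]
    push_cast
    ring
  have hRHS0 : pdx (A 0) x t = Ex := by
    unfold pdx
    rw [hAfunx 0]
    simp
    rfl
  rw [hLHS, hRHS1, hRHS0, hA (k - 1) x t]
  cases k with
  | zero => simp
  | succ m =>
    simp only [Nat.add_sub_cancel]
    push_cast
    ring
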